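/- Let α, β ∈ L(H,K) with ‖α‖ < 1 and ‖β‖ < 1. Then I - Φ_α(β)Φ_α(γ)* = D_{α*}(I - βα*)^{-1}(I - βγ*)(I - αγ*)^{-1}D_{α*} for all strict contractions β, γ ∈ L(H,K). In particular, taking γ = β shows Φ_α(β) is a strict contraction. -/

import Mathlib

open ContinuousLinearMap

noncomputable section
set_option linter.unusedSectionVars false
set_option maxHeartbeats 1000000

variable {H K : Type*}
  [NormedAddCommGroup H] [InnerProductSpace ℂ H] [CompleteSpace H]
  [NormedAddCommGroup K] [InnerProductSpace ℂ K] [CompleteSpace K]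

private lemma ring_inv_eq {a b : K →L[ℂ] K} (h1 : a ∘L b = 1) (h2 : b ∘L a = 1) :
    Ring.inverse a = b :=
  Ring.inverse_unit ⟨a, b, h1, h2⟩

private lemma inv_cancel_left {a : K →L[ℂ] K} (ha : IsUnit a) : Ring.inverse a ∘L a = 1 :=
  Ring.inverse_mul_cancel a ha

private lemma inv_cancel_right {a : K →L[ℂ] K} (ha : IsUnit a) : a ∘L Ring.inverse a = 1 :=
  Ring.mul_inverse_cancel a ha

private lemma swap_inv {T : H →L[ℂ] K} {a : H →L[ℂ] H} {b : K →L[ℂ] K}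
    (ha : IsUnit a) (hb : IsUnit b) (h : T ∘L a = b ∘L T) :
    T ∘L Ring.inverse a = Ring.inverse b ∘L T := by
  calc T ∘L Ring.inverse a
      = (Ring.inverse b ∘L b) ∘L (T ∘L Ring.inverse a) := by
        rw [inv_cancel_left hb, one_def, id_comp]
    _ = Ring.inverse b ∘L ((b ∘L T) ∘L Ring.inverse a) := rfl
    _ = Ring.inverse b ∘L ((T ∘L a) ∘L Ring.inverse a) := by rw [h]
    _ = Ring.inverse b ∘L (T ∘L (a ∘L Ring.inverse a)) := rfl
    _ = Ring.inverse b ∘L T := by rw [inv_cancel_right ha, one_def, comp_id]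

private lemma adjoint_ring_inv {a : K →L[ℂ] K} (ha : IsUnit a) :
    adjoint (Ring.inverse a) = Ring.inverse (adjoint a) := by
  refine (ring_inv_eq ?_ ?_).symm
  · rw [← adjoint_comp, inv_cancel_left ha, one_def, adjoint_id]
  · rw [← adjoint_comp, inv_cancel_right ha, one_def, adjoint_id]

private lemma one_comp' (f : H →L[ℂ] K) : (1 : K →L[ℂ] K) ∘L f = f := by
  rw [one_def, id_comp]

private lemma comp_one' (f : H →L[ℂ] K) : f ∘L (1 : H →L[ℂ] H) = f := by
  rw [one_def, comp_id]

/-- The Frostman transformation `Φ_α(β) = D_{α*} (1 - βα*)⁻¹ (β - α) D_α⁻¹`. -/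
def frostman (α : H →L[ℂ] K) (Dα : H →L[ℂ] H) (Dα' : K →L[ℂ] K) (β : H →L[ℂ] K) :
    H →L[ℂ] K :=
  Dα' ∘L (Ring.inverse (1 - β ∘L adjoint α)) ∘L (β - α) ∘L (Ring.inverse Dα)

/-- For strict contractions `α, β, γ ∈ L(H,K)`,
`1 - Φ_α(β) Φ_α(γ)* = D_{α*} (1 - βα*)⁻¹ (1 - βγ*) (1 - αγ*)⁻¹ D_{α*}`; in particular (taking
`γ = β`) `Φ_α(β)` is a strict contraction. -/
theorem stmt_11 (α : H →L[ℂ] K) (hα : ‖α‖ < 1)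
    (Dα : H →L[ℂ] H) (hDα : Dα.IsPositive) (hDα2 : Dα ∘L Dα = 1 - (adjoint α) ∘L α)
    (Dα' : K →L[ℂ] K) (hDα' : Dα'.IsPositive) (hDα'2 : Dα' ∘L Dα' = 1 - α ∘L (adjoint α)) :
    ∀ β γ : H →L[ℂ] K, ‖β‖ < 1 → ‖γ‖ < 1 →
      ((1 : K →L[ℂ] K) - (frostman α Dα Dα' β) ∘L adjoint (frostman α Dα Dα' γ)
        = Dα' ∘L (Ring.inverse (1 - β ∘L adjoint α)) ∘L (1 - β ∘L adjoint γ) ∘L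
            (Ring.inverse (1 - α ∘L adjoint γ)) ∘L Dα') ∧
      ‖frostman α Dα Dα' β‖ < 1 := by
  -- units
  have hnorm : ∀ (x y : H →L[ℂ] K), ‖x‖ < 1 → ‖y‖ < 1 →
      IsUnit ((1 : K →L[ℂ] K) - x ∘L adjoint y) := by
    intro x y hx hy
    apply isUnit_one_sub_of_norm_lt_one
    calc ‖x ∘L adjoint y‖ ≤ ‖x‖ * ‖adjoint y‖ := opNorm_comp_le _ _
      _ = ‖x‖ * ‖y‖ := by rw [LinearIsometryEquiv.norm_map adjoint]
      _ < 1 := by nlinarith [norm_nonneg x, norm_nonneg y]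
  have uh : IsUnit ((1 : H →L[ℂ] H) - adjoint α ∘L α) := by
    apply isUnit_one_sub_of_norm_lt_one
    calc ‖adjoint α ∘L α‖ ≤ ‖adjoint α‖ * ‖α‖ := opNorm_comp_le _ _
      _ = ‖α‖ * ‖α‖ := by rw [LinearIsometryEquiv.norm_map adjoint]
      _ < 1 := by nlinarith [norm_nonneg α]
  have uk : IsUnit ((1 : K →L[ℂ] K) - α ∘L adjoint α) := hnorm α α hα hα
  set ih := Ring.inverse ((1 : H →L[ℂ] H) - adjoint α ∘L α) with hih
  set ik := Ring.inverse ((1 : K →L[ℂ] K) - α ∘L adjoint α) with hik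
  -- Dα, Dα' are units
  have uDα : IsUnit Dα := by
    refine ⟨⟨Dα, Dα ∘L ih, ?_, ?_⟩, rfl⟩
    · show Dα ∘L (Dα ∘L ih) = 1
      calc Dα ∘L (Dα ∘L ih) = (Dα ∘L Dα) ∘L ih := rfl
        _ = 1 := by rw [hDα2]; exact inv_cancel_right uh
    · show (Dα ∘L ih) ∘L Dα = 1
      have hc : Dα ∘L ih = ih ∘L Dα := swap_inv uh uh (by rw [← hDα2]; rfl)
      calc (Dα ∘L ih) ∘L Dα = ih ∘L (Dα ∘L Dα) := by rw [hc]; rfl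
        _ = 1 := by rw [hDα2]; exact inv_cancel_left uh
  have uDα' : IsUnit Dα' := by
    refine ⟨⟨Dα', Dα' ∘L ik, ?_, ?_⟩, rfl⟩
    · show Dα' ∘L (Dα' ∘L ik) = 1
      calc Dα' ∘L (Dα' ∘L ik) = (Dα' ∘L Dα') ∘L ik := rfl
        _ = 1 := by rw [hDα'2]; exact inv_cancel_right uk
    · show (Dα' ∘L ik) ∘L Dα' = 1
      have hc : Dα' ∘L ik = ik ∘L Dα' := swap_inv uk uk (by rw [← hDα'2]; rfl)
      calc (Dα' ∘L ik) ∘L Dα' = ik ∘L (Dα' ∘L Dα') := by rw [hc]; rfl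
        _ = 1 := by rw [hDα'2]; exact inv_cancel_left uk
  have haDα : adjoint Dα = Dα := hDα.1.clm_adjoint_eq
  have haDα' : adjoint Dα' = Dα' := hDα'.1.clm_adjoint_eq
  -- swaps
  have s1 : α ∘L ih = ik ∘L α := by
    refine swap_inv uh uk ?_
    ext x; simp
  have s2 : adjoint α ∘L ik = ih ∘L adjoint α := by
    refine swap_inv uk uh ?_
    ext x; simp
  -- iD ∘ iD = ih
  have hiD2 : Ring.inverse Dα ∘L Ring.inverse Dα = ih := by
    symm
    refine ring_inv_eq ?_ ?_
    · calc ((1 : H →L[ℂ] H) - adjoint α ∘L α) ∘L (Ring.inverse Dα ∘L Ring.inverse Dα)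
          = (Dα ∘L Dα) ∘L (Ring.inverse Dα ∘L Ring.inverse Dα) := by rw [hDα2]
        _ = Dα ∘L ((Dα ∘L Ring.inverse Dα) ∘L Ring.inverse Dα) := rfl
        _ = 1 := by rw [inv_cancel_right uDα]; exact inv_cancel_right uDα
    · calc (Ring.inverse Dα ∘L Ring.inverse Dα) ∘L ((1 : H →L[ℂ] H) - adjoint α ∘L α)
          = (Ring.inverse Dα ∘L Ring.inverse Dα) ∘L (Dα ∘L Dα) := by rw [hDα2]
        _ = Ring.inverse Dα ∘L ((Ring.inverse Dα ∘L Dα) ∘L Dα) := rfl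
        _ = 1 := by rw [inv_cancel_left uDα]; exact inv_cancel_left uDα
  -- Dα' ∘ ik ∘ Dα' = 1
  have honeK : Dα' ∘L (ik ∘L Dα') = 1 := by
    have hc : Dα' ∘L ik = ik ∘L Dα' := swap_inv uk uk (by rw [← hDα'2]; rfl)
    calc Dα' ∘L (ik ∘L Dα') = (Dα' ∘L ik) ∘L Dα' := rfl
      _ = ik ∘L (Dα' ∘L Dα') := by rw [hc]; rfl
      _ = 1 := by rw [hDα'2]; exact inv_cancel_left uk
  have ha1 : adjoint (1 : K →L[ℂ] K) = 1 := by rw [one_def, adjoint_id]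
  -- main identity for arbitrary strict contractions
  have key : ∀ β γ : H →L[ℂ] K, ‖β‖ < 1 → ‖γ‖ < 1 →
      (1 : K →L[ℂ] K) - (frostman α Dα Dα' β) ∘L adjoint (frostman α Dα Dα' γ)
        = Dα' ∘L (Ring.inverse (1 - β ∘L adjoint α)) ∘L (1 - β ∘L adjoint γ) ∘L
            (Ring.inverse (1 - α ∘L adjoint γ)) ∘L Dα' := by
    intro β γ hβ hγ
    have u1 : IsUnit ((1 : K →L[ℂ] K) - β ∘L adjoint α) := hnorm β α hβ hα
    have u1γ : IsUnit ((1 : K →L[ℂ] K) - γ ∘L adjoint α) := hnorm γ α hγ hα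
    have u2 : IsUnit ((1 : K →L[ℂ] K) - α ∘L adjoint γ) := by
      have := hnorm γ α hγ hα
      have h := adjoint_ring_inv this
      -- direct
      apply isUnit_one_sub_of_norm_lt_one
      calc ‖α ∘L adjoint γ‖ ≤ ‖α‖ * ‖adjoint γ‖ := opNorm_comp_le _ _
        _ = ‖α‖ * ‖γ‖ := by rw [LinearIsometryEquiv.norm_map adjoint]
        _ < 1 := by nlinarith [norm_nonneg α, norm_nonneg γ]
    set A := adjoint α with hA
    set G := adjoint γ with hG
    set i1 := Ring.inverse ((1 : K →L[ℂ] K) - β ∘L A) with hi1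
    set i2 := Ring.inverse ((1 : K →L[ℂ] K) - α ∘L G) with hi2
    -- atoms
    have e1 : ik ∘L (α ∘L A) = ik - 1 := by
      have h : ik ∘L ((1 : K →L[ℂ] K) - α ∘L A) = 1 := inv_cancel_left uk
      have h' : ik - ik ∘L (α ∘L A) = 1 := by
        rw [← h, comp_sub, comp_one']
      calc ik ∘L (α ∘L A) = ik - (ik - ik ∘L (α ∘L A)) := (sub_sub_cancel _ _).symm
        _ = ik - 1 := by rw [h']
    have e2 : ih ∘L (A ∘L (α ∘L G)) = ih ∘L G - G := by
      have h : ih ∘L (((1 : H →L[ℂ] H) - A ∘L α) ∘L G) = G := by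
        calc ih ∘L (((1 : H →L[ℂ] H) - A ∘L α) ∘L G)
            = (ih ∘L ((1 : H →L[ℂ] H) - A ∘L α)) ∘L G := rfl
          _ = (1 : H →L[ℂ] H) ∘L G := by rw [inv_cancel_left uh]
          _ = G := by rw [one_def, id_comp]
      have hx : ((1 : H →L[ℂ] H) - A ∘L α) ∘L G = G - A ∘L (α ∘L G) := by
        rw [sub_comp, one_comp', comp_assoc]
      have h' : ih ∘L G - ih ∘L (A ∘L (α ∘L G)) = G := by
        rw [← comp_sub, ← hx]; exact h
      calc ih ∘L (A ∘L (α ∘L G))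
          = ih ∘L G - (ih ∘L G - ih ∘L (A ∘L (α ∘L G))) := (sub_sub_cancel _ _).symm
        _ = ih ∘L G - G := by rw [h']
    have c1 : ik ∘L ((1 : K →L[ℂ] K) - α ∘L G) = ik - ik ∘L (α ∘L G) := by
      rw [comp_sub, comp_one']
    have c2 : β ∘L (A ∘L (ik ∘L ((1 : K →L[ℂ] K) - α ∘L G)))
        = β ∘L (ih ∘L A) - (β ∘L (ih ∘L G) - β ∘L G) := by
      have hs : A ∘L (ik ∘L ((1 : K →L[ℂ] K) - α ∘L G)) = ih ∘L (A - A ∘L (α ∘L G)) := by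
        calc A ∘L (ik ∘L ((1 : K →L[ℂ] K) - α ∘L G))
            = (A ∘L ik) ∘L ((1 : K →L[ℂ] K) - α ∘L G) := rfl
          _ = (ih ∘L A) ∘L ((1 : K →L[ℂ] K) - α ∘L G) := by rw [s2]
          _ = ih ∘L (A ∘L ((1 : K →L[ℂ] K) - α ∘L G)) := rfl
          _ = ih ∘L (A - A ∘L (α ∘L G)) := by rw [comp_sub, comp_one']
      rw [hs, comp_sub, comp_sub, e2, comp_sub]
    have c3 : β ∘L (ih ∘L (G - A)) = β ∘L (ih ∘L G) - β ∘L (ih ∘L A) := by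
      rw [comp_sub, comp_sub]
    have c4 : α ∘L (ih ∘L (G - A)) = ik ∘L (α ∘L G) - (ik - 1) := by
      calc α ∘L (ih ∘L (G - A)) = (α ∘L ih) ∘L (G - A) := rfl
        _ = (ik ∘L α) ∘L (G - A) := by rw [s1]
        _ = ik ∘L (α ∘L G - α ∘L A) := by rw [comp_assoc, comp_sub]
        _ = ik ∘L (α ∘L G) - ik ∘L (α ∘L A) := by rw [comp_sub]
        _ = ik ∘L (α ∘L G) - (ik - 1) := by rw [e1]
    have core : ((1 : K →L[ℂ] K) - β ∘L A) ∘L (ik ∘L ((1 : K →L[ℂ] K) - α ∘L G))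
        - (β - α) ∘L (ih ∘L (G - A)) = (1 : K →L[ℂ] K) - β ∘L G := by
      calc ((1 : K →L[ℂ] K) - β ∘L A) ∘L (ik ∘L ((1 : K →L[ℂ] K) - α ∘L G))
            - (β - α) ∘L (ih ∘L (G - A))
          = ik ∘L ((1 : K →L[ℂ] K) - α ∘L G)
              - β ∘L (A ∘L (ik ∘L ((1 : K →L[ℂ] K) - α ∘L G)))
              - (β ∘L (ih ∘L (G - A)) - α ∘L (ih ∘L (G - A))) := by
            rw [sub_comp, sub_comp, one_def, id_comp]; rfl
        _ = (ik - ik ∘L (α ∘L G)) - (β ∘L (ih ∘L A) - (β ∘L (ih ∘L G) - β ∘L G))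
              - ((β ∘L (ih ∘L G) - β ∘L (ih ∘L A)) - (ik ∘L (α ∘L G) - (ik - 1))) := by
            rw [c2, c3, c4, c1]
        _ = (1 : K →L[ℂ] K) - β ∘L G := by abel
    -- adjoint of frostman γ
    have hΦγadj : adjoint (frostman α Dα Dα' γ)
        = Ring.inverse Dα ∘L ((G - A) ∘L (i2 ∘L Dα')) := by
      have hadj1 : adjoint ((1 : K →L[ℂ] K) - γ ∘L A) = (1 : K →L[ℂ] K) - α ∘L G := by
        rw [map_sub, ha1, adjoint_comp, hA, adjoint_adjoint]
      calc adjoint (frostman α Dα Dα' γ)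
          = adjoint (Ring.inverse Dα) ∘L (adjoint (γ - α)
              ∘L (adjoint (Ring.inverse ((1 : K →L[ℂ] K) - γ ∘L A)) ∘L adjoint Dα')) := by
            simp only [frostman, adjoint_comp]; rfl
        _ = Ring.inverse Dα ∘L ((G - A) ∘L (i2 ∘L Dα')) := by
            rw [adjoint_ring_inv uDα, haDα, map_sub, adjoint_ring_inv u1γ, hadj1, haDα']
    -- Φβ Φγ*
    have hΦΦ : frostman α Dα Dα' β ∘L adjoint (frostman α Dα Dα' γ)
        = Dα' ∘L (i1 ∘L (((β - α) ∘L (ih ∘L (G - A))) ∘L (i2 ∘L Dα'))) := by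
      rw [hΦγadj]
      calc frostman α Dα Dα' β ∘L (Ring.inverse Dα ∘L ((G - A) ∘L (i2 ∘L Dα')))
          = Dα' ∘L (i1 ∘L ((β - α) ∘L ((Ring.inverse Dα ∘L Ring.inverse Dα)
              ∘L ((G - A) ∘L (i2 ∘L Dα'))))) := rfl
        _ = Dα' ∘L (i1 ∘L ((β - α) ∘L (ih ∘L ((G - A) ∘L (i2 ∘L Dα'))))) := by rw [hiD2]
        _ = Dα' ∘L (i1 ∘L (((β - α) ∘L (ih ∘L (G - A))) ∘L (i2 ∘L Dα'))) := rfl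
    -- the "one" decomposition
    have hOne : (1 : K →L[ℂ] K)
        = Dα' ∘L (i1 ∘L ((((1 : K →L[ℂ] K) - β ∘L A) ∘L (ik ∘L ((1 : K →L[ℂ] K) - α ∘L G)))
            ∘L (i2 ∘L Dα'))) := by
      symm
      calc Dα' ∘L (i1 ∘L ((((1 : K →L[ℂ] K) - β ∘L A) ∘L (ik ∘L ((1 : K →L[ℂ] K) - α ∘L G)))
              ∘L (i2 ∘L Dα')))
          = Dα' ∘L ((i1 ∘L ((1 : K →L[ℂ] K) - β ∘L A))
              ∘L (ik ∘L ((((1 : K →L[ℂ] K) - α ∘L G) ∘L i2) ∘L Dα'))) := rfl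
        _ = Dα' ∘L (ik ∘L Dα') := by
            rw [inv_cancel_left u1, inv_cancel_right u2]
            simp only [one_def, id_comp]
        _ = 1 := honeK
    have combine : ∀ P Q : K →L[ℂ] K,
        Dα' ∘L (i1 ∘L (P ∘L (i2 ∘L Dα'))) - Dα' ∘L (i1 ∘L (Q ∘L (i2 ∘L Dα')))
          = Dα' ∘L (i1 ∘L ((P - Q) ∘L (i2 ∘L Dα'))) := by
      intro P Q
      rw [sub_comp, comp_sub, comp_sub]
    calc (1 : K →L[ℂ] K) - frostman α Dα Dα' β ∘L adjoint (frostman α Dα Dα' γ)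
        = Dα' ∘L (i1 ∘L ((((1 : K →L[ℂ] K) - β ∘L A) ∘L (ik ∘L ((1 : K →L[ℂ] K) - α ∘L G)))
              ∘L (i2 ∘L Dα')))
            - Dα' ∘L (i1 ∘L (((β - α) ∘L (ih ∘L (G - A))) ∘L (i2 ∘L Dα'))) := by
          rw [hΦΦ]; rw [← hOne]
      _ = Dα' ∘L (i1 ∘L (((((1 : K →L[ℂ] K) - β ∘L A) ∘L (ik ∘L ((1 : K →L[ℂ] K) - α ∘L G)))
            - (β - α) ∘L (ih ∘L (G - A))) ∘L (i2 ∘L Dα'))) := combine _ _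
      _ = Dα' ∘L (i1 ∘L (((1 : K →L[ℂ] K) - β ∘L G) ∘L (i2 ∘L Dα'))) := by rw [core]
  intro β γ hβ hγ
  refine ⟨key β γ hβ hγ, ?_⟩
  -- norm bound
  have idβ := key β β hβ hβ
  set Φ := frostman α Dα Dα' β with hΦ
  set i1 := Ring.inverse ((1 : K →L[ℂ] K) - β ∘L adjoint α) with hi1
  set i2β := Ring.inverse ((1 : K →L[ℂ] K) - α ∘L adjoint β) with hi2β
  have u1 : IsUnit ((1 : K →L[ℂ] K) - β ∘L adjoint α) := hnorm β α hβ hα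
  have u2β : IsUnit ((1 : K →L[ℂ] K) - α ∘L adjoint β) := by
    apply isUnit_one_sub_of_norm_lt_one
    calc ‖α ∘L adjoint β‖ ≤ ‖α‖ * ‖adjoint β‖ := opNorm_comp_le _ _
      _ = ‖α‖ * ‖β‖ := by rw [LinearIsometryEquiv.norm_map adjoint]
      _ < 1 := by nlinarith [norm_nonneg α, norm_nonneg β]
  set Aop := Dα' ∘L i1 with hAop
  set T := i2β ∘L Dα' with hT
  have hTadj : adjoint Aop = T := by
    rw [hAop, adjoint_comp, hi1, adjoint_ring_inv u1, haDα', map_sub, ha1, adjoint_comp,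
      adjoint_adjoint, hT, hi2β]
  have idβ' : (1 : K →L[ℂ] K) - Φ ∘L adjoint Φ
      = Aop ∘L (((1 : K →L[ℂ] K) - β ∘L adjoint β) ∘L T) := idβ
  -- B with B ∘ T = 1
  set B := (Dα' ∘L ik) ∘L ((1 : K →L[ℂ] K) - α ∘L adjoint β) with hB
  have hBT : B ∘L T = 1 := by
    calc B ∘L T = (Dα' ∘L ik) ∘L ((((1 : K →L[ℂ] K) - α ∘L adjoint β) ∘L i2β) ∘L Dα') := rfl
      _ = Dα' ∘L (ik ∘L Dα') := by
          rw [inv_cancel_right u2β]; simp only [one_def, id_comp]; rfl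
      _ = 1 := honeK
  -- energy identity for every y
  have energy : ∀ y : K, ‖adjoint Φ y‖ ^ 2
      = ‖y‖ ^ 2 - ‖T y‖ ^ 2 + ‖adjoint β (T y)‖ ^ 2 := by
    intro y
    have happ : RCLike.re (inner ℂ ((((1 : K →L[ℂ] K) - Φ ∘L adjoint Φ)) y) y : ℂ)
        = RCLike.re (inner ℂ ((Aop ∘L (((1 : K →L[ℂ] K) - β ∘L adjoint β) ∘L T)) y) y : ℂ) := by
      rw [idβ']
    have left : RCLike.re (inner ℂ (((1 : K →L[ℂ] K) - Φ ∘L adjoint Φ) y) y : ℂ)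
        = ‖y‖ ^ 2 - ‖adjoint Φ y‖ ^ 2 := by
      have st : (((1 : K →L[ℂ] K) - Φ ∘L adjoint Φ) y) = y - Φ (adjoint Φ y) := rfl
      have h2 : (inner ℂ (Φ (adjoint Φ y)) y : ℂ) = inner ℂ (adjoint Φ y) (adjoint Φ y) :=
        (adjoint_inner_right Φ (adjoint Φ y) y).symm
      rw [st, inner_sub_left, h2, map_sub, inner_self_eq_norm_sq, inner_self_eq_norm_sq]
    have right : RCLike.re (inner ℂ ((Aop ∘L (((1 : K →L[ℂ] K) - β ∘L adjoint β) ∘L T)) y) y : ℂ)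
        = ‖T y‖ ^ 2 - ‖adjoint β (T y)‖ ^ 2 := by
      have st : ((Aop ∘L (((1 : K →L[ℂ] K) - β ∘L adjoint β) ∘L T)) y)
          = Aop (T y - β (adjoint β (T y))) := rfl
      have h1 : (inner ℂ (Aop (T y - β (adjoint β (T y)))) y : ℂ)
          = inner ℂ (T y - β (adjoint β (T y))) (adjoint Aop y) :=
        (adjoint_inner_right Aop (T y - β (adjoint β (T y))) y).symm
      have h2 : (inner ℂ (β (adjoint β (T y))) (T y) : ℂ)
          = inner ℂ (adjoint β (T y)) (adjoint β (T y)) :=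
        (adjoint_inner_right β (adjoint β (T y)) (T y)).symm
      rw [st, h1, hTadj, inner_sub_left, h2, map_sub, inner_self_eq_norm_sq,
        inner_self_eq_norm_sq]
    rw [left, right] at happ
    linarith [happ]
  have hTy : ∀ y : K, ‖y‖ ≤ ‖B‖ * ‖T y‖ := by
    intro y
    calc ‖y‖ = ‖B (T y)‖ := by rw [← comp_apply, hBT]; rfl
      _ ≤ ‖B‖ * ‖T y‖ := le_opNorm B (T y)
  have hβad : ∀ z : K, ‖adjoint β z‖ ≤ ‖β‖ * ‖z‖ := by
    intro z
    calc ‖adjoint β z‖ ≤ ‖adjoint β‖ * ‖z‖ := le_opNorm _ _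
      _ = ‖β‖ * ‖z‖ := by rw [LinearIsometryEquiv.norm_map adjoint]
  have hΦnorm : ‖Φ‖ = ‖adjoint Φ‖ := (LinearIsometryEquiv.norm_map adjoint Φ).symm
  by_cases hB0 : ‖B‖ = 0
  · -- degenerate case : K is trivial
    have hBz : B = 0 := norm_eq_zero.mp hB0
    have h10 : (1 : K →L[ℂ] K) = 0 := by rw [← hBT, hBz, zero_comp]
    have hy : ∀ y : K, y = 0 := by
      intro y
      calc y = (1 : K →L[ℂ] K) y := rfl
        _ = (0 : K →L[ℂ] K) y := by rw [h10]
        _ = 0 := rfl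
    have : Φ = 0 := by ext x; exact hy (Φ x)
    rw [this, norm_zero]; norm_num
  · have hBpos : 0 < ‖B‖ := lt_of_le_of_ne (norm_nonneg B) (Ne.symm hB0)
    set c := (1 - ‖β‖ ^ 2) / ‖B‖ ^ 2 with hc
    have hcpos : 0 < c := by
      apply div_pos
      · nlinarith [norm_nonneg β]
      · positivity
    have hcB : c * ‖B‖ ^ 2 = 1 - ‖β‖ ^ 2 := by
      rw [hc, div_mul_cancel₀]; positivity
    have bound : ∀ y : K, ‖adjoint Φ y‖ ^ 2 ≤ (1 - c) * ‖y‖ ^ 2 := by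
      intro y
      have h1 := energy y
      have h2 := hβad (T y)
      have h3 := hTy y
      have sq2 : ‖adjoint β (T y)‖ ^ 2 ≤ ‖β‖ ^ 2 * ‖T y‖ ^ 2 := by
        have h4 := mul_self_le_mul_self (norm_nonneg (adjoint β (T y))) h2
        calc ‖adjoint β (T y)‖ ^ 2 = ‖adjoint β (T y)‖ * ‖adjoint β (T y)‖ := sq _
          _ ≤ (‖β‖ * ‖T y‖) * (‖β‖ * ‖T y‖) := h4
          _ = ‖β‖ ^ 2 * ‖T y‖ ^ 2 := by ring
      have sq3 : ‖y‖ ^ 2 ≤ ‖B‖ ^ 2 * ‖T y‖ ^ 2 := by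
        have h4 := mul_self_le_mul_self (norm_nonneg y) h3
        calc ‖y‖ ^ 2 = ‖y‖ * ‖y‖ := sq _
          _ ≤ (‖B‖ * ‖T y‖) * (‖B‖ * ‖T y‖) := h4
          _ = ‖B‖ ^ 2 * ‖T y‖ ^ 2 := by ring
      have step : c * ‖y‖ ^ 2 ≤ (1 - ‖β‖ ^ 2) * ‖T y‖ ^ 2 := by
        calc c * ‖y‖ ^ 2 ≤ c * (‖B‖ ^ 2 * ‖T y‖ ^ 2) :=
              mul_le_mul_of_nonneg_left sq3 hcpos.le
          _ = (1 - ‖β‖ ^ 2) * ‖T y‖ ^ 2 := by rw [← hcB]; ring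
      linarith [h1, sq2, step]
    have h1mc : 0 ≤ 1 - c := by
      obtain ⟨y, hy⟩ : ∃ y : K, y ≠ 0 := by
        by_contra h
        push_neg at h
        have : B = 0 := by ext x; exact h (B x)
        exact hB0 (by rw [this, norm_zero])
      have hb := bound y
      have hypos : 0 < ‖y‖ ^ 2 := pow_pos (norm_pos_iff.mpr hy) 2
      by_contra hcon
      push_neg at hcon
      have hneg : (1 - c) * ‖y‖ ^ 2 < 0 := mul_neg_of_neg_of_pos (by linarith) hypos
      linarith [sq_nonneg (‖adjoint Φ y‖)]
    have hle : ‖adjoint Φ‖ ≤ Real.sqrt (1 - c) := by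
      apply opNorm_le_bound _ (Real.sqrt_nonneg _)
      intro y
      have hb := bound y
      have := Real.sqrt_le_sqrt hb
      rwa [Real.sqrt_sq (norm_nonneg _), Real.sqrt_mul h1mc, Real.sqrt_sq (norm_nonneg _)]
        at this
    have : Real.sqrt (1 - c) < 1 := by
      have h2 : Real.sqrt (1 - c) < Real.sqrt 1 := by
        apply Real.sqrt_lt_sqrt h1mc
        linarith
      rwa [Real.sqrt_one] at h2
    rw [hΦnorm]
    linarith [hle]

end
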